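/- For every asymmetric weighted graph d on n vertices there exist a unique d₁ ∈ ST and a unique asymmetric graph d₂ orthogonal to ST such that d = d₁ + d₂; moreover, for every closed walk v, the d-length of v equals the d₂-length of v. -/

import Mathlib

/-- An asymmetric weighted graph on `n` vertices. -/
def IsAsymGraph {n : ℕ} (d : Fin n → Fin n → ℝ) : Prop :=
  ∀ i j, d i j = -(d j i)

/-- Strong transitivity. -/
def StronglyTransitive {n : ℕ} (d : Fin n → Fin n → ℝ) : Prop :=
  ∀ i j k, d i j + d j k = d i k

/-- The `d`-length of a walk `v` of length `m`. -/
def walkLen {n m : ℕ} (d : Fin n → Fin n → ℝ) (v : Fin (m + 1) → Fin n) : ℝ :=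
  ∑ t : Fin m, d (v t.castSucc) (v t.succ)

/-- The inner product of two weighted graphs. -/
def ginner {n : ℕ} (d e : Fin n → Fin n → ℝ) : ℝ :=
  ∑ i : Fin n, ∑ j : Fin n, d i j * e i j

/-- `d` is orthogonal to every strongly transitive asymmetric graph. -/
def OrthST {n : ℕ} (d : Fin n → Fin n → ℝ) : Prop :=
  ∀ e : Fin n → Fin n → ℝ, IsAsymGraph e → StronglyTransitive e → ginner d e = 0

/-- The three-cycle graph on the pairwise distinct vertices `p q r`. -/
def threeCycle {n : ℕ} (p q r : Fin n) : Fin n → Fin n → ℝ :=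
  fun a b =>
    if (a, b) = (p, q) ∨ (a, b) = (q, r) ∨ (a, b) = (r, p) then 1
    else if (a, b) = (q, p) ∨ (a, b) = (r, q) ∨ (a, b) = (p, r) then -1
    else 0

/-- The `d`-length of a Hamiltonian circuit given by a bijection `v`. -/
def hamLen {n : ℕ} (d : Fin n → Fin n → ℝ) (v : Fin n → Fin n) : ℝ :=
  ∑ t : Fin n, d (v t) (v (finRotate n t))

lemma orth_of_rowsum {n : ℕ} (q : Fin n → Fin n → ℝ) (hq : IsAsymGraph q)
    (h : ∀ i, ∑ j, q i j = 0) : OrthST q := by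
  intro e he hte
  rcases Nat.eq_zero_or_pos n with h0 | hn
  · subst h0; simp [ginner]
  set g : Fin n → ℝ := fun i => (∑ k, e i k) / n with hg
  have hrep : ∀ i j, e i j = g i - g j := by
    intro i j
    have hc : ∀ k : Fin n, e i k - e j k = e i j := by
      intro k
      have h1 := hte i k j
      have h2 := he j k
      linarith
    have hsum : ∑ k : Fin n, (e i k - e j k) = n * e i j := by
      rw [Finset.sum_congr rfl (fun k _ => hc k)]
      simp [Finset.sum_const, Finset.card_univ, nsmul_eq_mul]
    have hne : (n : ℝ) ≠ 0 := by positivity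
    rw [Finset.sum_sub_distrib] at hsum
    simp only [hg]
    field_simp
    linarith
  have hcol : ∀ j, ∑ i, q i j = 0 := by
    intro j
    have h1 : ∑ i : Fin n, (q i j + q j i) = 0 := by
      apply Finset.sum_eq_zero; intro i _; rw [hq i j]; ring
    rw [Finset.sum_add_distrib, h j] at h1
    linarith
  have : ginner q e = ∑ i, ∑ j, (q i j * g i - q i j * g j) := by
    unfold ginner
    apply Finset.sum_congr rfl; intro i _
    apply Finset.sum_congr rfl; intro j _
    rw [hrep i j]; ring
  rw [this]
  have h1 : ∑ i, ∑ j, q i j * g i = 0 := by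
    apply Finset.sum_eq_zero; intro i _
    rw [← Finset.sum_mul, h i, zero_mul]
  have h2 : ∑ i, ∑ j, q i j * g j = 0 := by
    rw [Finset.sum_comm]
    apply Finset.sum_eq_zero; intro j _
    rw [← Finset.sum_mul, hcol j, zero_mul]
  simp only [Finset.sum_sub_distrib]
  rw [h1, h2]; ring

lemma decomp_unique {n : ℕ} (d : Fin n → Fin n → ℝ)
    (a b a' b' : Fin n → Fin n → ℝ)
    (haa : IsAsymGraph a) (ha : StronglyTransitive a) (hb : OrthST b)
    (haa' : IsAsymGraph a') (ha' : StronglyTransitive a') (hb' : OrthST b')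
    (h : d = a + b) (h' : d = a' + b') : a = a' ∧ b = b' := by
  have hpt : ∀ i j, a i j + b i j = a' i j + b' i j := by
    intro i j
    have := congrFun (congrFun (h.symm.trans h') i) j
    simpa using this
  set e : Fin n → Fin n → ℝ := fun i j => a i j - a' i j with he
  have he_asym : IsAsymGraph e := by
    intro i j; simp only [he]; rw [haa i j, haa' i j]; ring
  have he_st : StronglyTransitive e := by
    intro i j k; simp only [he]
    have h1 := ha i j k; have h2 := ha' i j k; linarith
  have hgz : ginner e e = 0 := by
    have heq : ginner e e = ginner b' e - ginner b e := by
      unfold ginner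
      rw [← Finset.sum_sub_distrib]
      apply Finset.sum_congr rfl; intro i _
      rw [← Finset.sum_sub_distrib]
      apply Finset.sum_congr rfl; intro j _
      have := hpt i j
      simp only [he]
      linear_combination (a i j - a' i j) * hpt i j
    rw [heq, hb e he_asym he_st, hb' e he_asym he_st]; ring
  have hterm : ∀ i j, e i j = 0 := by
    have h1 := (Finset.sum_eq_zero_iff_of_nonneg
      (fun i _ => Finset.sum_nonneg (fun j _ => mul_self_nonneg (e i j)))).mp hgz
    intro i j
    have h2 := (Finset.sum_eq_zero_iff_of_nonneg
      (fun j _ => mul_self_nonneg (e i j))).mp (h1 i (Finset.mem_univ i)) j (Finset.mem_univ j)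
    exact mul_self_eq_zero.mp h2
  have haeq : a = a' := by
    funext i j
    have := hterm i j
    simp only [he] at this
    linarith
  refine ⟨haeq, ?_⟩
  funext i j
  have h1 := hpt i j
  have h2 : a i j = a' i j := by rw [haeq]
  linarith

lemma st_walk_zero {n m : ℕ} (a : Fin n → Fin n → ℝ) (haa : IsAsymGraph a)
    (ha : StronglyTransitive a) (v : Fin (m + 1) → Fin n) (hv : v (Fin.last m) = v 0) :
    walkLen a v = 0 := by
  set g : Fin n → ℝ := fun x => a x (v 0) with hg
  have hrep : ∀ x y, a x y = g x - g y := by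
    intro x y
    have h1 := ha x (v 0) y
    have h2 := haa (v 0) y
    simp only [hg]
    linarith
  have : walkLen a v = (∑ t : Fin m, g (v t.castSucc)) - ∑ t : Fin m, g (v t.succ) := by
    unfold walkLen
    rw [← Finset.sum_sub_distrib]
    exact Finset.sum_congr rfl (fun t _ => hrep _ _)
  rw [this]
  have hc : ∑ t : Fin m, g (v t.castSucc) =
      (∑ t : Fin (m+1), g (v t)) - g (v (Fin.last m)) := by
    rw [Fin.sum_univ_castSucc (f := fun t => g (v t))]; ring
  have hs : ∑ t : Fin m, g (v t.succ) =
      (∑ t : Fin (m+1), g (v t)) - g (v 0) := by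
    rw [Fin.sum_univ_succ (f := fun t => g (v t))]; ring
  rw [hc, hs, hv]; ring

theorem stmt5 (n : ℕ) (d : Fin n → Fin n → ℝ) (hd : IsAsymGraph d) :
    (∃! p : (Fin n → Fin n → ℝ) × (Fin n → Fin n → ℝ),
      (IsAsymGraph p.1 ∧ StronglyTransitive p.1) ∧
      (IsAsymGraph p.2 ∧ OrthST p.2) ∧ d = p.1 + p.2) ∧
    ∀ d₁ d₂ : Fin n → Fin n → ℝ,
      IsAsymGraph d₁ → StronglyTransitive d₁ → IsAsymGraph d₂ → OrthST d₂ →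
      d = d₁ + d₂ →
      ∀ (m : ℕ) (v : Fin (m + 1) → Fin n), v (Fin.last m) = v 0 →
        walkLen d v = walkLen d₂ v := by
  set f : Fin n → ℝ := fun i => (∑ j, d i j) / n with hf
  set a : Fin n → Fin n → ℝ := fun i j => f i - f j with ha
  set b : Fin n → Fin n → ℝ := fun i j => d i j - a i j with hb
  have ha_asym : IsAsymGraph a := by intro i j; simp only [ha]; ring
  have ha_st : StronglyTransitive a := by intro i j k; simp only [ha]; ring
  have hb_asym : IsAsymGraph b := by
    intro i j; simp only [hb, ha]; rw [hd i j]; ring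
  have htot : ∑ j, ∑ k, d j k = 0 := by
    have h1 : ∑ j : Fin n, ∑ k : Fin n, (d j k + d k j) = 0 := by
      apply Finset.sum_eq_zero; intro j _
      apply Finset.sum_eq_zero; intro k _; rw [hd j k]; ring
    have h2 : ∑ j : Fin n, ∑ k : Fin n, d k j = ∑ j : Fin n, ∑ k : Fin n, d j k :=
      Finset.sum_comm
    simp only [Finset.sum_add_distrib] at h1
    linarith
  have hrow : ∀ i, ∑ j, b i j = 0 := by
    intro i
    have hn : 0 < n := i.pos
    have hne : (n : ℝ) ≠ 0 := by positivity
    have hT : ∑ j : Fin n, f j = 0 := by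
      simp only [hf, ← Finset.sum_div, htot, zero_div]
    have : ∑ j : Fin n, b i j = (∑ j, d i j) - (n : ℝ) * f i + ∑ j, f j := by
      simp only [hb, ha, Finset.sum_sub_distrib]
      rw [Finset.sum_const, Finset.card_univ, Fintype.card_fin, nsmul_eq_mul]
      ring
    rw [this, hT]
    simp only [hf]
    field_simp
    ring
  have hb_orth : OrthST b := orth_of_rowsum b hb_asym hrow
  have hdab : d = a + b := by funext i j; simp [hb]
  constructor
  · refine ⟨(a, b), ⟨⟨ha_asym, ha_st⟩, ⟨hb_asym, hb_orth⟩, hdab⟩, ?_⟩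
    rintro ⟨a', b'⟩ ⟨⟨haa', hst'⟩, ⟨hba', horth'⟩, hd'⟩
    have := decomp_unique d a' b' a b haa' hst' horth' ha_asym ha_st hb_orth hd' hdab
    simp [Prod.ext_iff, this.1, this.2]
  · intro d₁ d₂ h1a h1s h2a h2o hsum m v hv
    have hw : walkLen d v = walkLen d₁ v + walkLen d₂ v := by
      unfold walkLen
      rw [← Finset.sum_add_distrib]
      apply Finset.sum_congr rfl; intro t _
      rw [hsum]; simp
    rw [hw, st_walk_zero d₁ h1a h1s v hv, zero_add]
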